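/- For all n ≥ 1 and 1 ≤ i ≤ n, the number of permutations of [n] avoiding both 1423 and 1432 and starting with the letter i equals S_{n,i}. -/

import Mathlib

/-- `π` contains the pattern `p` (given as the sequence of its values). -/
def ContainsPat {n k : ℕ} (π : Equiv.Perm (Fin n)) (p : Fin k → ℕ) : Prop :=
  ∃ f : Fin k → Fin n, StrictMono f ∧ ∀ a b : Fin k, p a < p b ↔ π (f a) < π (f b)

/-- The first letter of `π` (in one-line notation, with values in `[n] = {1,…,n}`) is `i`. -/
def FirstIs {n : ℕ} (π : Equiv.Perm (Fin n)) (i : ℕ) : Prop :=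
  ∀ j : Fin n, (j : ℕ) = 0 → (π j : ℕ) + 1 = i

open Equiv

def AvT {M : ℕ} (σ : Perm (Fin M)) : Prop :=
  ¬ ∃ p1 p2 p3 p4 : Fin M, p1 < p2 ∧ p2 < p3 ∧ p3 < p4 ∧
    σ p1 < σ p3 ∧ σ p1 < σ p4 ∧ σ p3 < σ p2 ∧ σ p4 < σ p2

def TopP {M : ℕ} (j : ℕ) (σ : Perm (Fin M)) : Prop :=
  ¬ ∃ q1 q2 q3 : Fin M, q1 < q2 ∧ q2 < q3 ∧ σ q2 < σ q1 ∧ σ q3 < σ q1 ∧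
    M ≤ (σ q2 : ℕ) + j ∧ M ≤ (σ q3 : ℕ) + j

def ins {m : ℕ} (a : Fin (m+1)) (τ : Perm (Fin m)) : Perm (Fin (m+1)) :=
  (finSuccEquiv' 0).trans ((Equiv.optionCongr τ).trans (finSuccEquiv' a).symm)

lemma ins_zero {m : ℕ} (a : Fin (m+1)) (τ : Perm (Fin m)) : ins a τ 0 = a := by
  simp [ins, finSuccEquiv'_at, finSuccEquiv'_symm_none]

lemma ins_succ {m : ℕ} (a : Fin (m+1)) (τ : Perm (Fin m)) (x : Fin m) :
    ins a τ x.succ = a.succAbove (τ x) := by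
  have h : finSuccEquiv' (0 : Fin (m+1)) x.succ = some x := by
    have := finSuccEquiv'_succAbove (0 : Fin (m+1)) x
    rwa [Fin.succAbove_zero] at this
  simp [ins, h, finSuccEquiv'_symm_some]

lemma sa_coe {m : ℕ} (a : Fin (m+1)) (t : Fin m) :
    ((a.succAbove t : Fin (m+1)) : ℕ) = (t : ℕ) ∧ (t : ℕ) < (a : ℕ) ∨
    ((a.succAbove t : Fin (m+1)) : ℕ) = (t : ℕ) + 1 ∧ (a : ℕ) ≤ (t : ℕ) := by
  rcases lt_or_ge (Fin.castSucc t) a with h | h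
  · exact Or.inl ⟨by rw [Fin.succAbove_of_castSucc_lt _ _ h]; rfl, by simpa [Fin.lt_def] using h⟩
  · exact Or.inr ⟨by rw [Fin.succAbove_of_le_castSucc _ _ h]; rfl, by simpa [Fin.le_def] using h⟩

lemma pos_succ {M : ℕ} {p q : Fin (M+1)} (h : p < q) : ∃ y : Fin M, q = y.succ := by
  rcases Fin.eq_zero_or_eq_succ q with rfl | hy
  · exact absurd h (by simp)
  · exact hy

lemma P1 {m : ℕ} (a : Fin (m+1)) (τ : Perm (Fin m)) :
    AvT (ins a τ) ↔ AvT τ ∧ TopP (m - (a : ℕ)) τ := by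
  constructor
  · intro h
    constructor
    · rintro ⟨x1, x2, x3, x4, h12, h23, h34, v13, v14, v32, v42⟩
      exact h ⟨x1.succ, x2.succ, x3.succ, x4.succ,
        Fin.succ_lt_succ_iff.mpr h12, Fin.succ_lt_succ_iff.mpr h23, Fin.succ_lt_succ_iff.mpr h34,
        by rw [ins_succ, ins_succ]; exact Fin.succAbove_lt_succAbove_iff.mpr v13,
        by rw [ins_succ, ins_succ]; exact Fin.succAbove_lt_succAbove_iff.mpr v14,
        by rw [ins_succ, ins_succ]; exact Fin.succAbove_lt_succAbove_iff.mpr v32,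
        by rw [ins_succ, ins_succ]; exact Fin.succAbove_lt_succAbove_iff.mpr v42⟩
    · rintro ⟨q1, q2, q3, h12, h23, v21, v31, t2, t3⟩
      have ha := a.isLt
      refine h ⟨0, q1.succ, q2.succ, q3.succ, Fin.succ_pos _,
        Fin.succ_lt_succ_iff.mpr h12, Fin.succ_lt_succ_iff.mpr h23, ?_, ?_,
        by rw [ins_succ, ins_succ]; exact Fin.succAbove_lt_succAbove_iff.mpr v21,
        by rw [ins_succ, ins_succ]; exact Fin.succAbove_lt_succAbove_iff.mpr v31⟩
      · rw [ins_zero, ins_succ, Fin.lt_def]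
        have := sa_coe a (τ q2); omega
      · rw [ins_zero, ins_succ, Fin.lt_def]
        have := sa_coe a (τ q3); omega
  · rintro ⟨hT, hP⟩ ⟨p1, p2, p3, p4, h12, h23, h34, v13, v14, v32, v42⟩
    have ha := a.isLt
    obtain ⟨x2, rfl⟩ := pos_succ h12
    obtain ⟨x3, rfl⟩ := pos_succ h23
    obtain ⟨x4, rfl⟩ := pos_succ h34
    rw [ins_succ, ins_succ] at v32 v42
    rcases Fin.eq_zero_or_eq_succ p1 with rfl | ⟨x1, rfl⟩
    · rw [ins_zero, ins_succ] at v13 v14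
      refine hP ⟨x2, x3, x4, Fin.succ_lt_succ_iff.mp h23, Fin.succ_lt_succ_iff.mp h34,
        Fin.succAbove_lt_succAbove_iff.mp v32, Fin.succAbove_lt_succAbove_iff.mp v42, ?_, ?_⟩
      · rw [Fin.lt_def] at v13
        have := sa_coe a (τ x3); omega
      · rw [Fin.lt_def] at v14
        have := sa_coe a (τ x4); omega
    · rw [ins_succ, ins_succ] at v13 v14
      exact hT ⟨x1, x2, x3, x4, Fin.succ_lt_succ_iff.mp h12, Fin.succ_lt_succ_iff.mp h23,
        Fin.succ_lt_succ_iff.mp h34,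
        Fin.succAbove_lt_succAbove_iff.mp v13, Fin.succAbove_lt_succAbove_iff.mp v14,
        Fin.succAbove_lt_succAbove_iff.mp v32, Fin.succAbove_lt_succAbove_iff.mp v42⟩

lemma P2a {m : ℕ} (a : Fin (m+1)) (τ : Perm (Fin m)) {j : ℕ} (hj : (a : ℕ) + j ≤ m + 1)
    (h : AvT (ins a τ)) : TopP j (ins a τ) := by
  obtain ⟨hT, hP⟩ := (P1 a τ).mp h
  rintro ⟨q1, q2, q3, h12, h23, v21, v31, t2, t3⟩
  have ha := a.isLt
  obtain ⟨x2, rfl⟩ := pos_succ h12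
  obtain ⟨x3, rfl⟩ := pos_succ h23
  rw [ins_succ] at v21 v31 t2 t3
  rcases Fin.eq_zero_or_eq_succ q1 with rfl | ⟨x1, rfl⟩
  · rw [ins_zero, Fin.lt_def] at v21
    have := sa_coe a (τ x2); omega
  · rw [ins_succ] at v21 v31
    refine hP ⟨x1, x2, x3, Fin.succ_lt_succ_iff.mp h12, Fin.succ_lt_succ_iff.mp h23,
      Fin.succAbove_lt_succAbove_iff.mp v21, Fin.succAbove_lt_succAbove_iff.mp v31, ?_, ?_⟩
    · have := sa_coe a (τ x2); omega
    · have := sa_coe a (τ x3); omega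

lemma P2b {m : ℕ} (a : Fin (m+1)) (τ : Perm (Fin m)) {j : ℕ} (hj : (a : ℕ) + j = m + 2) :
    TopP j (ins a τ) ↔ TopP (j-1) τ := by
  have ha := a.isLt
  constructor
  · intro h
    rintro ⟨x1, x2, x3, h12, h23, v21, v31, t2, t3⟩
    refine h ⟨x1.succ, x2.succ, x3.succ, Fin.succ_lt_succ_iff.mpr h12,
      Fin.succ_lt_succ_iff.mpr h23,
      by rw [ins_succ, ins_succ]; exact Fin.succAbove_lt_succAbove_iff.mpr v21,
      by rw [ins_succ, ins_succ]; exact Fin.succAbove_lt_succAbove_iff.mpr v31, ?_, ?_⟩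
    · rw [ins_succ]; have := sa_coe a (τ x2); omega
    · rw [ins_succ]; have := sa_coe a (τ x3); omega
  · intro h
    rintro ⟨q1, q2, q3, h12, h23, v21, v31, t2, t3⟩
    obtain ⟨x2, rfl⟩ := pos_succ h12
    obtain ⟨x3, rfl⟩ := pos_succ h23
    rw [ins_succ] at v21 v31 t2 t3
    rcases Fin.eq_zero_or_eq_succ q1 with rfl | ⟨x1, rfl⟩
    · rw [ins_zero, Fin.lt_def] at v21 v31
      have hne : (τ x2 : ℕ) ≠ (τ x3 : ℕ) := by
        intro hc
        have : x2 = x3 := τ.injective (Fin.val_injective hc)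
        exact absurd (this ▸ Fin.succ_lt_succ_iff.mp h23) (lt_irrefl _)
      have := sa_coe a (τ x2); have := sa_coe a (τ x3); omega
    · rw [ins_succ] at v21 v31
      refine h ⟨x1, x2, x3, Fin.succ_lt_succ_iff.mp h12, Fin.succ_lt_succ_iff.mp h23,
        Fin.succAbove_lt_succAbove_iff.mp v21, Fin.succAbove_lt_succAbove_iff.mp v31, ?_, ?_⟩
      · have := sa_coe a (τ x2); omega
      · have := sa_coe a (τ x3); omega

lemma topP_false {m : ℕ} (σ : Perm (Fin (m+1))) {a j : ℕ} (h0 : (σ 0 : ℕ) = a)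
    (ha : 2 ≤ a) (hj : m + 3 ≤ a + j) : ¬ TopP j σ := by
  intro h
  have hb := (σ 0).isLt
  have ha1 : a - 1 < m + 1 := by omega
  have ha2 : a - 2 < m + 1 := by omega
  set r1 := σ.symm ⟨a-1, ha1⟩ with hr1
  set r2 := σ.symm ⟨a-2, ha2⟩ with hr2
  have e1 : (σ r1 : ℕ) = a - 1 := by rw [hr1, Equiv.apply_symm_apply]
  have e2 : (σ r2 : ℕ) = a - 2 := by rw [hr2, Equiv.apply_symm_apply]
  have n1 : r1 ≠ 0 := fun hc => by rw [hc, h0] at e1; omega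
  have n2 : r2 ≠ 0 := fun hc => by rw [hc, h0] at e2; omega
  have n12 : r1 ≠ r2 := fun hc => by rw [hc, e2] at e1; omega
  have p1 : (0 : Fin (m+1)) < r1 := Fin.pos_iff_ne_zero.mpr n1
  have p2 : (0 : Fin (m+1)) < r2 := Fin.pos_iff_ne_zero.mpr n2
  rcases lt_or_gt_of_ne n12 with hlt | hlt
  · exact h ⟨0, r1, r2, p1, hlt, by rw [Fin.lt_def]; omega, by rw [Fin.lt_def]; omega,
      by omega, by omega⟩
  · exact h ⟨0, r2, r1, p2, hlt, by rw [Fin.lt_def]; omega, by rw [Fin.lt_def]; omega,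
      by omega, by omega⟩
lemma contains_iff {M : ℕ} (σ : Perm (Fin M)) :
    (¬ ContainsPat σ ![1, 4, 2, 3] ∧ ¬ ContainsPat σ ![1, 4, 3, 2]) ↔ AvT σ := by
  rw [← not_or]
  apply not_congr
  constructor
  · rintro (⟨f, hm, hf⟩ | ⟨f, hm, hf⟩)
    · exact ⟨f 0, f 1, f 2, f 3, hm (by decide), hm (by decide), hm (by decide),
        (hf 0 2).mp (by decide), (hf 0 3).mp (by decide),
        (hf 2 1).mp (by decide), (hf 3 1).mp (by decide)⟩
    · exact ⟨f 0, f 1, f 2, f 3, hm (by decide), hm (by decide), hm (by decide),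
        (hf 0 2).mp (by decide), (hf 0 3).mp (by decide),
        (hf 2 1).mp (by decide), (hf 3 1).mp (by decide)⟩
  · rintro ⟨p1, p2, p3, p4, h12, h23, h34, v13, v14, v32, v42⟩
    have hmono : StrictMono ![p1, p2, p3, p4] := by
      intro x y hxy
      fin_cases x <;> fin_cases y <;>
        first
          | exact absurd hxy (by decide)
          | exact h12 | exact h23 | exact h34
          | exact h12.trans h23 | exact h23.trans h34 | exact (h12.trans h23).trans h34
    have v12 : σ p1 < σ p2 := v13.trans v32
    rcases lt_or_gt_of_ne (fun h : σ p3 = σ p4 => (ne_of_lt h34) (σ.injective h)) with h43 | h43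
    · left
      refine ⟨![p1, p2, p3, p4], hmono, fun a b => ?_⟩
      fin_cases a <;> fin_cases b <;>
        first
          | exact iff_of_false (by decide) (lt_irrefl _)
          | exact iff_of_true (by decide) v12
          | exact iff_of_true (by decide) v13
          | exact iff_of_true (by decide) v14
          | exact iff_of_true (by decide) h43
          | exact iff_of_true (by decide) v32
          | exact iff_of_true (by decide) v42
          | exact iff_of_false (by decide) (asymm v12)
          | exact iff_of_false (by decide) (asymm v13)
          | exact iff_of_false (by decide) (asymm v14)
          | exact iff_of_false (by decide) (asymm h43)
          | exact iff_of_false (by decide) (asymm v32)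
          | exact iff_of_false (by decide) (asymm v42)
    · right
      refine ⟨![p1, p2, p3, p4], hmono, fun a b => ?_⟩
      fin_cases a <;> fin_cases b <;>
        first
          | exact iff_of_false (by decide) (lt_irrefl _)
          | exact iff_of_true (by decide) v12
          | exact iff_of_true (by decide) v13
          | exact iff_of_true (by decide) v14
          | exact iff_of_true (by decide) h43
          | exact iff_of_true (by decide) v32
          | exact iff_of_true (by decide) v42
          | exact iff_of_false (by decide) (asymm v12)
          | exact iff_of_false (by decide) (asymm v13)
          | exact iff_of_false (by decide) (asymm v14)
          | exact iff_of_false (by decide) (asymm h43)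
          | exact iff_of_false (by decide) (asymm v32)
          | exact iff_of_false (by decide) (asymm v42)
lemma ins_inj {m : ℕ} (a : Fin (m+1)) : Function.Injective (ins a) := by
  intro τ τ' h
  ext x
  have := congrFun (congrArg (fun (e : Perm (Fin (m+1))) => (e : Fin (m+1) → Fin (m+1))) h) x.succ
  simp only [ins_succ] at this
  exact congrArg Fin.val ((Fin.strictMono_succAbove a).injective this)

lemma ins_surj {m : ℕ} (a : Fin (m+1)) (σ : Perm (Fin (m+1))) (h0 : σ 0 = a) :
    ∃ τ, ins a τ = σ := by
  set e : Option (Fin m) ≃ Option (Fin m) :=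
    ((finSuccEquiv' (0 : Fin (m+1))).symm.trans σ).trans (finSuccEquiv' a) with he
  have hnone : e none = none := by
    simp [he, finSuccEquiv'_symm_none, h0, finSuccEquiv'_at]
  refine ⟨Equiv.removeNone e, ?_⟩
  ext x
  refine Fin.cases ?_ (fun y => ?_) x
  · rw [ins_zero, h0]
  · rw [ins_succ]
    have hx : ∃ z, e (some y) = some z := by
      cases hy : e (some y) with
      | none => exact absurd (e.injective (hy.trans hnone.symm)) (by simp)
      | some z => exact ⟨z, rfl⟩
    have hr := Equiv.removeNone_some e hx
    have hsy : (finSuccEquiv' (0 : Fin (m+1))).symm (some y) = y.succ := by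
      rw [finSuccEquiv'_symm_some, Fin.succAbove_zero]
    have : e (some y) = finSuccEquiv' a (σ y.succ) := by
      rw [he]; simp [hsy]
    rw [this] at hr
    have := congrArg (finSuccEquiv' a).symm hr
    rw [finSuccEquiv'_symm_some, Equiv.symm_apply_apply] at this
    exact congrArg Fin.val this

lemma card_first {m : ℕ} (P : Perm (Fin (m+1)) → Prop) (Q : Perm (Fin m) → Prop)
    (a : Fin (m+1)) (hPQ : ∀ τ, P (ins a τ) ↔ Q τ) :
    Nat.card {σ : Perm (Fin (m+1)) // P σ ∧ σ 0 = a} = Nat.card {τ : Perm (Fin m) // Q τ} := by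
  apply Nat.card_congr
  refine Equiv.symm (Equiv.ofBijective (fun τ => ⟨ins a τ.1, (hPQ τ.1).mpr τ.2, ins_zero a τ.1⟩) ⟨?_, ?_⟩)
  · intro τ τ' h
    exact Subtype.ext (ins_inj a (congrArg Subtype.val h))
  · rintro ⟨σ, hP, h0⟩
    obtain ⟨τ, hτ⟩ := ins_surj a σ h0
    exact ⟨⟨τ, (hPQ τ).mp (hτ ▸ hP)⟩, Subtype.ext hτ⟩

lemma topP_zero {M : ℕ} (σ : Perm (Fin M)) : TopP 0 σ := by
  rintro ⟨q1, q2, q3, _, _, _, _, t2, _⟩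
  have := (σ q2).isLt; omega

lemma topP_mono {M : ℕ} {j1 j2 : ℕ} (h : j1 ≤ j2) {σ : Perm (Fin M)}
    (hP : TopP j2 σ) : TopP j1 σ := by
  rintro ⟨q1, q2, q3, h12, h23, v21, v31, t2, t3⟩
  exact hP ⟨q1, q2, q3, h12, h23, v21, v31, by omega, by omega⟩

noncomputable def Fc (M j : ℕ) : ℕ := Nat.card {σ : Perm (Fin M) // AvT σ ∧ TopP j σ}

noncomputable def NcN (M j a : ℕ) : ℕ :=
  Nat.card {σ : Perm (Fin M) // (AvT σ ∧ TopP j σ) ∧ ∀ q : Fin M, (q : ℕ) = 0 → (σ q : ℕ) = a}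

lemma first_iff {m : ℕ} (σ : Perm (Fin (m+1))) (a : Fin (m+1)) :
    (∀ q : Fin (m+1), (q : ℕ) = 0 → (σ q : ℕ) = (a : ℕ)) ↔ σ 0 = a :=
  ⟨fun h => Fin.val_injective (h 0 rfl),
   fun h q hq => by rw [show q = 0 from Fin.val_injective hq, h]⟩

lemma ncN_eq {m : ℕ} (j : ℕ) (a : Fin (m+1)) :
    NcN (m+1) j (a : ℕ) =
      Nat.card {σ : Perm (Fin (m+1)) // (AvT σ ∧ TopP j σ) ∧ σ 0 = a} :=
  Nat.card_congr (Equiv.subtypeEquivRight fun σ =>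
    and_congr_right fun _ => first_iff σ a)

lemma fc_zero (j : ℕ) : Fc 0 j = 1 := by
  rw [Fc, Nat.card_congr (Equiv.subtypeUnivEquiv fun σ =>
    ⟨fun ⟨p, _⟩ => p.elim0, fun ⟨q, _⟩ => q.elim0⟩)]
  simp [Nat.card_eq_fintype_card]

lemma fc_sum (m j : ℕ) :
    Fc (m+1) j = ∑ a ∈ Finset.range (m+1), NcN (m+1) j a := by
  classical
  have e : {σ : Perm (Fin (m+1)) // AvT σ ∧ TopP j σ} ≃
      Σ b : Fin (m+1), {σ : Perm (Fin (m+1)) // (AvT σ ∧ TopP j σ) ∧ σ 0 = b} :=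
    { toFun := fun s => ⟨s.1 0, s.1, s.2, rfl⟩
      invFun := fun x => ⟨x.2.1, x.2.2.1⟩
      left_inv := fun s => rfl
      right_inv := fun x => by rcases x with ⟨b, σ, hP, rfl⟩; rfl }
  rw [Fc, Nat.card_congr e, Nat.card_eq_fintype_card, Fintype.card_sigma,
    ← Fin.sum_univ_eq_sum_range (fun a => NcN (m+1) j a)]
  exact Finset.sum_congr rfl fun b _ => by rw [ncN_eq j b, Nat.card_eq_fintype_card]

lemma key1 {m : ℕ} (j a : ℕ) (ha : a ≤ m) (hja : a + j ≤ m + 1) :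
    NcN (m+1) j a = Fc m (m - a) := by
  have haf : a < m + 1 := by omega
  have hc : ((⟨a, haf⟩ : Fin (m+1)) : ℕ) = a := rfl
  rw [← hc, ncN_eq j ⟨a, haf⟩, Fc]
  apply card_first
  intro τ
  constructor
  · rintro ⟨h1, _⟩; exact (P1 _ τ).mp h1
  · intro hq
    have hi := (P1 ⟨a, haf⟩ τ).mpr hq
    exact ⟨hi, P2a _ τ (by simpa [hc] using hja) hi⟩

lemma key2 {m : ℕ} (j a : ℕ) (ha : a ≤ m) (hja : a + j = m + 2) :
    NcN (m+1) j a = Fc m (j - 1) := by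
  have haf : a < m + 1 := by omega
  have hc : ((⟨a, haf⟩ : Fin (m+1)) : ℕ) = a := rfl
  rw [← hc, ncN_eq j ⟨a, haf⟩, Fc]
  apply card_first
  intro τ
  constructor
  · rintro ⟨h1, h2⟩
    exact ⟨((P1 _ τ).mp h1).1, (P2b _ τ (by omega)).mp h2⟩
  · rintro ⟨hA, hPj⟩
    refine ⟨(P1 _ τ).mpr ⟨hA, topP_mono (by simp only [hc]; omega) hPj⟩, ?_⟩
    exact (P2b _ τ (by omega)).mpr hPj

lemma key3 {m : ℕ} (j a : ℕ) (ha : a ≤ m) (h3 : m + 3 ≤ a + j) (hjm : j ≤ m + 1) :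
    NcN (m+1) j a = 0 := by
  have : IsEmpty {σ : Perm (Fin (m+1)) //
      (AvT σ ∧ TopP j σ) ∧ ∀ q : Fin (m+1), (q : ℕ) = 0 → (σ q : ℕ) = a} :=
    ⟨fun ⟨σ, ⟨_, hP⟩, hf⟩ => topP_false σ (hf 0 rfl) (by omega) h3 hP⟩
  exact Nat.card_of_isEmpty

lemma M12 (m : ℕ) {j : ℕ} (hj : j ≤ 1) :
    Fc (m+1) j = ∑ r ∈ Finset.range (m+1), Fc m r := by
  rw [fc_sum]
  have h1 : ∀ a ∈ Finset.range (m+1), NcN (m+1) j a = Fc m (m - a) := fun a hamem => by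
    have := Finset.mem_range.mp hamem
    exact key1 j a (by omega) (by omega)
  rw [Finset.sum_congr rfl h1]
  have := Finset.sum_range_reflect (fun r => Fc m r) (m+1)
  rw [← this]
  refine Finset.sum_congr rfl fun a ha => ?_
  have := Finset.mem_range.mp ha
  have h2 : m + 1 - 1 - a = m - a := by omega
  rw [h2]

lemma M3 (m : ℕ) {j : ℕ} (hj2 : 2 ≤ j) (hjm : j ≤ m + 1) :
    Fc (m+1) j = (∑ i ∈ Finset.range (m+2-j), Fc m (j-1+i)) + Fc m (j-1) := by
  rw [fc_sum]
  set c := m + 2 - j with hc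
  have hc1 : 1 ≤ c := by omega
  have hcm : c ≤ m := by omega
  have hsplit : Finset.range (m+1) = Finset.range (c+1) ∪ Finset.Ico (c+1) (m+1) := by
    rw [Finset.range_eq_Ico, Finset.range_eq_Ico]
    exact (Finset.Ico_union_Ico_eq_Ico (a := 0) (b := c+1) (c := m+1) (by omega) (by omega)).symm
  rw [hsplit, Finset.sum_union (by
    rw [Finset.range_eq_Ico]
    exact Finset.Ico_disjoint_Ico_consecutive 0 (c+1) (m+1))]
  have hzero : ∑ a ∈ Finset.Ico (c+1) (m+1), NcN (m+1) j a = 0 := by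
    apply Finset.sum_eq_zero
    intro a hamem
    have := Finset.mem_Ico.mp hamem
    exact key3 j a (by omega) (by omega) (by omega)
  rw [hzero, add_zero, Finset.sum_range_succ]
  have hkey2 : NcN (m+1) j c = Fc m (j-1) := key2 j c (by omega) (by omega)
  rw [hkey2]
  congr 1
  have h1 : ∀ a ∈ Finset.range c, NcN (m+1) j a = Fc m (m - a) := fun a hamem => by
    have := Finset.mem_range.mp hamem
    exact key1 j a (by omega) (by omega)
  rw [Finset.sum_congr rfl h1]
  have := Finset.sum_range_reflect (fun i => Fc m (j-1+i)) c
  rw [← this]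
  refine Finset.sum_congr rfl fun a ha => ?_
  have := Finset.mem_range.mp ha
  have h2 : j - 1 + (c - 1 - a) = m - a := by omega
  rw [h2]

lemma C0 (M : ℕ) : Fc M 0 = Fc M 1 := by
  cases M with
  | zero => rw [fc_zero, fc_zero]
  | succ m => rw [M12 m (by omega), M12 m (by omega)]

lemma C1' (n : ℕ) (hn : 2 ≤ n) : Fc n 1 = Fc n 2 := by
  obtain ⟨m, rfl⟩ : ∃ m, n = m + 1 := ⟨n - 1, by omega⟩
  have hm : 1 ≤ m := by omega
  rw [M12 m (by omega), M3 m (by omega) (by omega)]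
  have e1 : m + 2 - 2 = m := by omega
  rw [e1, Finset.sum_range_succ' (fun r => Fc m r) m]
  have e2 : ∀ i ∈ Finset.range m, Fc m (i + 1) = Fc m (2 - 1 + i) :=
    fun i _ => by rw [show i + 1 = 2 - 1 + i by omega]
  rw [Finset.sum_congr rfl e2, C0 m]

lemma C2' (n : ℕ) (hn : 2 ≤ n) : Fc n n = 2 * Fc (n-1) (n-1) := by
  obtain ⟨m, rfl⟩ : ∃ m, n = m + 1 := ⟨n - 1, by omega⟩
  rw [M3 m (by omega) (by omega)]
  have e1 : m + 2 - (m + 1) = 1 := by omega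
  rw [e1, Finset.sum_range_one]
  have e2 : m + 1 - 1 + 0 = m := by omega
  have e3 : m + 1 - 1 = m := by omega
  rw [e2, e3]
  omega

lemma C3' (n j : ℕ) (hn : 2 ≤ n) (hj2 : 2 ≤ j) (hjn : j ≤ n - 1) :
    Fc n j + Fc (n-1) j = Fc n (j+1) + 2 * Fc (n-1) (j-1) := by
  obtain ⟨m, rfl⟩ : ∃ m, n = m + 1 := ⟨n - 1, by omega⟩
  have hjm : j ≤ m := by omega
  have e0 : m + 1 - 1 = m := by omega
  rw [e0]
  rw [M3 m hj2 (by omega), M3 m (by omega) (by omega)]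
  have e1 : m + 2 - j = (m + 1 - j) + 1 := by omega
  rw [e1, Finset.sum_range_succ' (fun i => Fc m (j - 1 + i)) (m + 1 - j)]
  have e2 : ∀ i ∈ Finset.range (m + 1 - j), Fc m (j - 1 + (i + 1)) = Fc m (j + i) :=
    fun i _ => by rw [show j - 1 + (i + 1) = j + i by omega]
  rw [Finset.sum_congr rfl e2]
  have e3 : j - 1 + 0 = j - 1 := by omega
  rw [e3]
  rw [show m + 2 - (j + 1) = m + 1 - j by omega]
  have e4 : j + 1 - 1 = j := by omega
  rw [e4]
  omega

lemma main_eq (S : ℕ → ℕ → ℤ)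
    (h11 : S 1 1 = 1) (h21 : S 2 1 = 1) (h22 : S 2 2 = 1)
    (h0 : ∀ n, S n 0 = 0)
    (hrec : ∀ n k, 1 ≤ k → k ≤ n - 2 →
      S n k = S n (k - 1) + 2 * S (n - 1) k - S (n - 1) (k - 1))
    (htop : ∀ n, 3 ≤ n → S n n = S n (n - 2) ∧ S n (n - 1) = S n (n - 2)) :
    ∀ n, 1 ≤ n → ∀ i, 1 ≤ i → i ≤ n → S n i = (Fc (n-1) (n-i) : ℤ) := by
  intro n
  induction n with
  | zero => intro h; exact absurd h (by omega)
  | succ N ih =>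
    intro _ i hi1 hin
    rcases Nat.lt_or_ge N 2 with hN | hN
    · interval_cases N
      · interval_cases i
        rw [h11, show (1:ℕ)-1 = 0 by omega, fc_zero]
        norm_num
      · have f11 : Fc 1 1 = 1 := by rw [M12 0 (by omega), Finset.sum_range_one, fc_zero]
        have f10 : Fc 1 0 = 1 := by rw [M12 0 (by omega), Finset.sum_range_one, fc_zero]
        interval_cases i
        · rw [h21, show (2:ℕ)-1 = 1 by omega, f11]; norm_num
        · rw [h22, show (2:ℕ)-1 = 1 by omega, show (2:ℕ)-2 = 0 by omega, f10]; norm_num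
    · have row : ∀ k, 1 ≤ k → k ≤ N - 1 → S (N+1) k = (Fc N (N+1-k) : ℤ) := by
        intro k
        induction k with
        | zero => intro h; exact absurd h (by omega)
        | succ K ihK =>
          intro _ hK2
          rcases Nat.eq_zero_or_pos K with rfl | hKpos
          · have hre := hrec (N+1) 1 (by omega) (by omega)
            rw [show (1:ℕ)-1 = 0 by omega, show N+1-1 = N by omega] at hre
            rw [hre, h0, h0, ih (by omega) 1 (by omega) (by omega)]
            have hC := C2' N hN
            rw [show N+1-(0+1) = N by omega, hC]
            push_cast; ring
          · have hre := hrec (N+1) (K+1) (by omega) (by omega)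
            rw [show K+1-1 = K by omega, show N+1-1 = N by omega] at hre
            rw [hre, ihK (by omega) (by omega), ih (by omega) (K+1) (by omega) (by omega),
              ih (by omega) K (by omega) (by omega)]
            have hC := C3' N (N-K) (by omega) (by omega) (by omega)
            rw [show N+1-(K+1) = N-K by omega, show N+1-K = N-K+1 by omega,
              show N-(K+1) = N-K-1 by omega]
            omega
      have hNN : N + 1 - 1 = N := by omega
      rcases Nat.lt_or_ge i N with hiN | hiN
      · rw [hNN]
        exact row i hi1 (by omega)
      · have h2 := htop (N+1) (by omega)
        rw [show N+1-2 = N-1 by omega, show N+1-1 = N by omega] at h2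
        have hrow := row (N-1) (by omega) (by omega)
        rw [show N+1-(N-1) = 2 by omega] at hrow
        have hC1 := C1' N hN
        rcases (show i = N ∨ i = N + 1 by omega) with h | h
        · rw [h, hNN, h2.2, hrow, show N+1-N = 1 by omega, hC1]
        · rw [h, hNN, h2.1, hrow, show N+1-(N+1) = 0 by omega, C0 N, hC1]


/-- The number of permutations of `[n]` avoiding the two patterns and starting with `i`
equals the Schröder triangle entry `S_{n,i}`. -/
theorem stmt_6 (S : ℕ → ℕ → ℤ)
    (h11 : S 1 1 = 1) (h21 : S 2 1 = 1) (h22 : S 2 2 = 1)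
    (h0 : ∀ n, S n 0 = 0)
    (hrec : ∀ n k, 1 ≤ k → k ≤ n - 2 →
      S n k = S n (k - 1) + 2 * S (n - 1) k - S (n - 1) (k - 1))
    (htop : ∀ n, 3 ≤ n → S n n = S n (n - 2) ∧ S n (n - 1) = S n (n - 2)) :
    ∀ n i, 1 ≤ n → 1 ≤ i → i ≤ n →
      (Nat.card {π : Equiv.Perm (Fin n) //
        ¬ ContainsPat π ![1, 4, 2, 3] ∧ ¬ ContainsPat π ![1, 4, 3, 2] ∧ FirstIs π i} : ℤ) = S n i := by
  intro n i hn hi1 hin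
  obtain ⟨m, rfl⟩ : ∃ m, n = m + 1 := ⟨n - 1, by omega⟩
  have hiff : ∀ σ : Perm (Fin (m+1)),
      (¬ ContainsPat σ ![1, 4, 2, 3] ∧ ¬ ContainsPat σ ![1, 4, 3, 2] ∧ FirstIs σ i) ↔
      ((AvT σ ∧ TopP 0 σ) ∧ ∀ q : Fin (m+1), (q : ℕ) = 0 → (σ q : ℕ) = i - 1) := by
    intro σ
    constructor
    · rintro ⟨hc1, hc2, hf⟩
      exact ⟨⟨(contains_iff σ).mp ⟨hc1, hc2⟩, topP_zero σ⟩,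
        fun q hq => by have := hf q hq; omega⟩
    · rintro ⟨⟨hA, _⟩, hf⟩
      have hc := (contains_iff σ).mpr hA
      exact ⟨hc.1, hc.2, fun q hq => by have := hf q hq; omega⟩
  have h1 : Nat.card {π : Equiv.Perm (Fin (m+1)) //
        ¬ ContainsPat π ![1, 4, 2, 3] ∧ ¬ ContainsPat π ![1, 4, 3, 2] ∧ FirstIs π i} =
      NcN (m+1) 0 (i-1) := Nat.card_congr (Equiv.subtypeEquivRight hiff)
  rw [h1, key1 0 (i-1) (by omega) (by omega),
    main_eq S h11 h21 h22 h0 hrec htop (m+1) (by omega) i hi1 hin,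
    show m+1-1 = m by omega, show m+1-i = m-(i-1) by omega]
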